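/- (Degree-3 intercommunication) If (A,u,v) ∈ ℛ with d_u(A) = 3, then for each neighbor u' of u one has (A,u,v) ↔ (A ∖ uu', u', v). -/
import Mathlib


attribute [local instance] Classical.propDecidable

namespace FPL

/-- Vertices of the brick-wall honeycomb lattice with periodic boundary conditions. -/
abbrev Vtx (m n : ℕ) := ZMod m × ZMod n

/-- Adjacency on the brick-wall honeycomb lattice: horizontal edges between `(i,j)` and
`(i+1,j)`, and vertical edges between `(i,j)` and `(i,j+1)` whenever `i+j` is even. -/
def HoneyAdj (m n : ℕ) (x y : Vtx m n) : Prop :=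
  (x.2 = y.2 ∧ (y.1 = x.1 + 1 ∨ x.1 = y.1 + 1)) ∨
  (x.1 = y.1 ∧ ((y.2 = x.2 + 1 ∧ Even (x.1.val + x.2.val)) ∨
                (x.2 = y.2 + 1 ∧ Even (y.1.val + y.2.val))))

variable (m n : ℕ) [NeZero m] [NeZero n]

/-- The edge set of the brick-wall honeycomb lattice. -/
noncomputable def honeyEdges : Finset (Sym2 (Vtx m n)) :=
  Finset.image (fun p : Vtx m n × Vtx m n => s(p.1, p.2))
    (Finset.univ.filter fun p => HoneyAdj m n p.1 p.2)

/-- `bdeg m n A x` is the degree of the vertex `x` in the spanning subgraph `(V, A)`. -/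
noncomputable def bdeg (A : Finset (Sym2 (Vtx m n))) (x : Vtx m n) : ℕ :=
  (A.filter fun e => x ∈ e).card

/-- `(A,u,v)` is a state of the worm chain: `A ⊆ E`, and the set of odd-degree vertices of
`(V,A)` is `{u,v}` if `u ≠ v`, and is empty if `u = v`. -/
def IsWormState (A : Finset (Sym2 (Vtx m n))) (u v : Vtx m n) : Prop :=
  A ⊆ honeyEdges m n ∧ ∀ x, (Odd (bdeg m n A x) ↔ ((x = u ∨ x = v) ∧ u ≠ v))

/-- The worm state space `𝒮`. -/
abbrev WormState := {p : Finset (Sym2 (Vtx m n)) × Vtx m n × Vtx m n //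
  IsWormState m n p.1 p.2.1 p.2.2}

/-- The set `ℛ` of states with no isolated vertices. -/
def FullSupport (st : WormState m n) : Prop := ∀ x : Vtx m n, bdeg m n st.1.1 x ≠ 0

/-- The fully-packed worm transition matrix `P'_∞`. -/
noncomputable def Pinf : Matrix (WormState m n) (WormState m n) ℝ := fun st tt =>
  if st.1.2.1 = st.1.2.2 then
    (if tt = st then (bdeg m n st.1.1 st.1.2.2 : ℝ) / 3 else 0) +
    (if ∃ v' : Vtx m n, HoneyAdj m n st.1.2.2 v' ∧ s(st.1.2.2, v') ∉ st.1.1 ∧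
        tt.1.1 = insert s(st.1.2.2, v') st.1.1 ∧
        ((tt.1.2.1 = v' ∧ tt.1.2.2 = st.1.2.2) ∨ (tt.1.2.1 = st.1.2.2 ∧ tt.1.2.2 = v'))
      then 1/6 else 0)
  else
    (if bdeg m n st.1.1 st.1.2.1 = 3 ∧ ∃ u' : Vtx m n, HoneyAdj m n st.1.2.1 u' ∧
        s(st.1.2.1, u') ∈ st.1.1 ∧ tt.1.1 = st.1.1.erase s(st.1.2.1, u') ∧
        tt.1.2.1 = u' ∧ tt.1.2.2 = st.1.2.2 then 1/6 else 0) +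
    (if bdeg m n st.1.1 st.1.2.1 = 1 ∧ ∃ u' : Vtx m n, HoneyAdj m n st.1.2.1 u' ∧
        s(st.1.2.1, u') ∉ st.1.1 ∧ tt.1.1 = insert s(st.1.2.1, u') st.1.1 ∧
        tt.1.2.1 = u' ∧ tt.1.2.2 = st.1.2.2 then 1/4 else 0) +
    (if bdeg m n st.1.1 st.1.2.2 = 3 ∧ ∃ v' : Vtx m n, HoneyAdj m n st.1.2.2 v' ∧
        s(st.1.2.2, v') ∈ st.1.1 ∧ tt.1.1 = st.1.1.erase s(st.1.2.2, v') ∧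
        tt.1.2.1 = st.1.2.1 ∧ tt.1.2.2 = v' then 1/6 else 0) +
    (if bdeg m n st.1.1 st.1.2.2 = 1 ∧ ∃ v' : Vtx m n, HoneyAdj m n st.1.2.2 v' ∧
        s(st.1.2.2, v') ∉ st.1.1 ∧ tt.1.1 = insert s(st.1.2.2, v') st.1.1 ∧
        tt.1.2.1 = st.1.2.1 ∧ tt.1.2.2 = v' then 1/4 else 0)

/-- `st → tt`: some power of `P'_∞` has positive `(st,tt)` entry. -/
def Reaches (st tt : WormState m n) : Prop := ∃ k : ℕ, 0 < (Pinf m n ^ k) st tt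

/-- `st ↔ tt`: mutual reachability. -/
def Comm (st tt : WormState m n) : Prop := Reaches m n st tt ∧ Reaches m n tt st

/-- The fully-packed configuration consisting of all horizontal edges. -/
noncomputable def Hconfig : Finset (Sym2 (Vtx m n)) :=
  Finset.image (fun p : Vtx m n => s(p, (p.1 + 1, p.2))) Finset.univ

lemma zmod_one_ne_zero {k : ℕ} (hk : 2 ≤ k) : (1 : ZMod k) ≠ 0 := by
  haveI : Fact (1 < k) := ⟨hk⟩
  exact one_ne_zero

lemma even_val_add_one {k : ℕ} [NeZero k] (hk : Even k) (hk2 : 2 ≤ k) (a : ZMod k) :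
    Even ((a + 1).val) ↔ ¬ Even a.val := by
  haveI : Fact (1 < k) := ⟨hk2⟩
  have h1 : (a + 1).val = (a.val + 1) % k := by rw [ZMod.val_add, ZMod.val_one]
  have h2 : (a + 1).val % 2 = (a.val + 1) % 2 := by
    rw [h1, Nat.mod_mod_of_dvd _ hk.two_dvd]
  rw [Nat.even_iff, Nat.even_iff]
  omega

lemma honeyAdj_symm {x y : Vtx m n} (h : HoneyAdj m n x y) : HoneyAdj m n y x := by
  rcases h with ⟨h1, h2 | h2⟩ | ⟨h1, ⟨h2, h3⟩ | ⟨h2, h3⟩⟩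
  · exact Or.inl ⟨h1.symm, Or.inr h2⟩
  · exact Or.inl ⟨h1.symm, Or.inl h2⟩
  · exact Or.inr ⟨h1.symm, Or.inr ⟨h2, h3⟩⟩
  · exact Or.inr ⟨h1.symm, Or.inl ⟨h2, h3⟩⟩

lemma honeyAdj_irrefl (hm2 : 2 ≤ m) (hn2 : 2 ≤ n) (x : Vtx m n) : ¬ HoneyAdj m n x x := by
  rintro (⟨-, h | h⟩ | ⟨-, ⟨h, -⟩ | ⟨h, -⟩⟩)
  · exact zmod_one_ne_zero hm2 (left_eq_add.mp h)
  · exact zmod_one_ne_zero hm2 (left_eq_add.mp h)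
  · exact zmod_one_ne_zero hn2 (left_eq_add.mp h)
  · exact zmod_one_ne_zero hn2 (left_eq_add.mp h)

lemma honeyAdj_cases (hn : Even n) (hn2 : 2 ≤ n) {x y : Vtx m n} (h : HoneyAdj m n x y) :
    y = (x.1 + 1, x.2) ∨ y = (x.1 - 1, x.2) ∨
      y = (x.1, if Even (x.1.val + x.2.val) then x.2 + 1 else x.2 - 1) := by
  rcases h with ⟨h1, h2 | h2⟩ | ⟨h1, ⟨h2, h3⟩ | ⟨h2, h3⟩⟩
  · exact Or.inl (Prod.ext h2 h1.symm)
  · exact Or.inr (Or.inl (Prod.ext (eq_sub_of_add_eq h2.symm) h1.symm))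
  · refine Or.inr (Or.inr (Prod.ext h1.symm ?_))
    rw [if_pos h3]; exact h2
  · refine Or.inr (Or.inr (Prod.ext h1.symm ?_))
    have hne : ¬ Even (x.1.val + x.2.val) := by
      rw [h1, h2, Nat.even_add, even_val_add_one hn hn2]
      rw [Nat.even_add] at h3
      tauto
    rw [if_neg hne]
    exact eq_sub_of_add_eq h2.symm

lemma mem_honeyEdges {x y : Vtx m n} (h : HoneyAdj m n x y) : s(x, y) ∈ honeyEdges m n :=
  Finset.mem_image.mpr ⟨(x, y), Finset.mem_filter.mpr ⟨Finset.mem_univ _, h⟩, rfl⟩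

lemma bdeg_le_three (hn : Even n) (hn2 : 2 ≤ n)
    {A : Finset (Sym2 (Vtx m n))} (hA : A ⊆ honeyEdges m n) (x : Vtx m n) :
    bdeg m n A x ≤ 3 := by
  have hsub : A.filter (fun e => x ∈ e) ⊆
      {s(x, (x.1 + 1, x.2)), s(x, (x.1 - 1, x.2)),
        s(x, (x.1, if Even (x.1.val + x.2.val) then x.2 + 1 else x.2 - 1))} := by
    intro e he
    rw [Finset.mem_filter] at he
    obtain ⟨heA, hxe⟩ := he
    have heE := hA heA
    rw [honeyEdges, Finset.mem_image] at heE
    obtain ⟨p, hp, hpe⟩ := heE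
    rw [Finset.mem_filter] at hp
    have hadj := hp.2
    subst hpe
    rw [Sym2.mem_iff] at hxe
    have hex : ∃ w, HoneyAdj m n x w ∧ s(p.1, p.2) = s(x, w) := by
      rcases hxe with h | h
      · exact ⟨p.2, by rw [h]; exact hadj, by rw [h]⟩
      · refine ⟨p.1, ?_, by rw [h, Sym2.eq_swap]⟩
        rw [h]
        exact honeyAdj_symm m n hadj
    obtain ⟨w, hw, hew⟩ := hex
    rw [hew]
    rcases honeyAdj_cases m n hn hn2 hw with h | h | h <;> simp [h]
  refine le_trans (Finset.card_le_card hsub) ?_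
  refine le_trans (Finset.card_insert_le _ _) ?_
  refine le_trans (Nat.add_le_add_right (Finset.card_insert_le _ _) 1) ?_
  simp [Finset.card_singleton]

lemma edge_mem_of_bdeg_three (hn : Even n) (hn2 : 2 ≤ n)
    {A : Finset (Sym2 (Vtx m n))} (hA : A ⊆ honeyEdges m n) {u u' : Vtx m n}
    (hdeg : bdeg m n A u = 3) (hadj : HoneyAdj m n u u') : s(u, u') ∈ A := by
  have hsub : A.filter (fun e => u ∈ e) ⊆ (honeyEdges m n).filter (fun e => u ∈ e) :=
    Finset.filter_subset_filter _ hA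
  have hle : ((honeyEdges m n).filter (fun e => u ∈ e)).card ≤ 3 :=
    bdeg_le_three m n hn hn2 (le_refl _) u
  unfold bdeg at hdeg
  have heq := Finset.eq_of_subset_of_card_le hsub (by rw [hdeg]; exact hle)
  have hmem : s(u, u') ∈ (honeyEdges m n).filter (fun e => u ∈ e) :=
    Finset.mem_filter.mpr ⟨mem_honeyEdges m n hadj, Sym2.mem_iff.mpr (Or.inl rfl)⟩
  rw [← heq] at hmem
  exact (Finset.mem_filter.mp hmem).1

lemma bdeg_erase_of_mem {A : Finset (Sym2 (Vtx m n))} {e : Sym2 (Vtx m n)} (he : e ∈ A)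
    {x : Vtx m n} (hx : x ∈ e) : bdeg m n (A.erase e) x = bdeg m n A x - 1 := by
  unfold bdeg
  rw [Finset.filter_erase, Finset.card_erase_of_mem (Finset.mem_filter.mpr ⟨he, hx⟩)]

lemma bdeg_erase_of_notMem {A : Finset (Sym2 (Vtx m n))} {e : Sym2 (Vtx m n)}
    {x : Vtx m n} (hx : x ∉ e) : bdeg m n (A.erase e) x = bdeg m n A x := by
  unfold bdeg
  have hnm : e ∉ A.filter (fun e => x ∈ e) := fun hc => hx (Finset.mem_filter.mp hc).2
  rw [Finset.filter_erase, Finset.erase_eq_of_notMem hnm]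

theorem degree_three_intercomm (m n : ℕ) [NeZero m] [NeZero n]
    (hm : Even m) (hn : Even n) (hm4 : 4 ≤ m) (hn4 : 4 ≤ n)
    (st : WormState m n) (hR : FullSupport m n st)
    (hdeg : bdeg m n st.1.1 st.1.2.1 = 3)
    (u' : Vtx m n) (hadj : HoneyAdj m n st.1.2.1 u') :
    ∃ t1 : WormState m n,
      t1.1 = (st.1.1.erase s(st.1.2.1, u'), u', st.1.2.2) ∧ Comm m n st t1 := by
  have hm2 : 2 ≤ m := by omega
  have hn2 : 2 ≤ n := by omega
  obtain ⟨⟨A, u, v⟩, hst⟩ := st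
  simp only at hdeg hadj hR ⊢
  have hAE : A ⊆ honeyEdges m n := hst.1
  have hodd : ∀ x, Odd (bdeg m n A x) ↔ ((x = u ∨ x = v) ∧ u ≠ v) := hst.2
  have hRA : ∀ x, bdeg m n A x ≠ 0 := fun x => hR x
  have huv : u ≠ v := ((hodd u).mp (by rw [hdeg]; exact ⟨1, rfl⟩)).2
  have huu' : u ≠ u' := fun h => honeyAdj_irrefl m n hm2 hn2 u (by rwa [← h] at hadj)
  have hAe : s(u, u') ∈ A := edge_mem_of_bdeg_three m n hn hn2 hAE hdeg hadj
  have humem : u ∈ s(u, u') := Sym2.mem_iff.mpr (Or.inl rfl)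
  have hu'mem : u' ∈ s(u, u') := Sym2.mem_iff.mpr (Or.inr rfl)
  -- the new configuration is a worm state
  have hws : IsWormState m n (A.erase s(u, u')) u' v := by
    refine ⟨fun e he => hAE (Finset.erase_subset _ _ he), fun x => ?_⟩
    by_cases hxu : x = u
    · subst hxu
      rw [bdeg_erase_of_mem m n hAe humem, hdeg, Nat.odd_iff]
      constructor
      · intro h; exact absurd h (by norm_num)
      · rintro ⟨h | h, -⟩
        · exact absurd h huu'
        · exact absurd h huv
    · by_cases hxu' : x = u'
      · subst hxu'
        rw [bdeg_erase_of_mem m n hAe hu'mem]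
        by_cases hu'v : x = v
        · have ho : Odd (bdeg m n A x) := (hodd x).mpr ⟨Or.inr hu'v, huv⟩
          rw [Nat.odd_iff] at ho ⊢
          constructor
          · intro h; omega
          · rintro ⟨-, hne⟩; exact absurd hu'v hne
        · have he : ¬ Odd (bdeg m n A x) := by
            rw [hodd x]; rintro ⟨h | h, -⟩
            · exact hxu h
            · exact hu'v h
          have hpos := hRA x
          rw [Nat.odd_iff] at he ⊢
          exact ⟨fun _ => ⟨Or.inl rfl, fun hc => hu'v hc⟩, fun _ => by omega⟩
      · have hxe : x ∉ s(u, u') := by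
          rw [Sym2.mem_iff]; rintro (h | h); exacts [hxu h, hxu' h]
        rw [bdeg_erase_of_notMem m n hxe, hodd x]
        constructor
        · rintro ⟨h | h, -⟩
          · exact absurd h hxu
          · exact ⟨Or.inr h, fun hc => hxu' (h.trans hc.symm)⟩
        · rintro ⟨h | h, -⟩
          · exact absurd h hxu'
          · exact ⟨Or.inr h, huv⟩
  have step : ∀ s t : WormState m n, 0 < Pinf m n s t → Reaches m n s t :=
    fun s t h => ⟨1, by rwa [pow_one]⟩
  -- forward step
  have hfwd : 0 < Pinf m n ⟨(A, u, v), hst⟩ ⟨(A.erase s(u, u'), u', v), hws⟩ := by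
    unfold Pinf
    rw [if_neg (huv : ¬ u = v)]
    rw [if_pos (⟨hdeg, u', hadj, hAe, rfl, rfl, rfl⟩ :
      bdeg m n A u = 3 ∧ ∃ w, HoneyAdj m n u w ∧ s(u, w) ∈ A ∧
        A.erase s(u, u') = A.erase s(u, w) ∧ u' = w ∧ v = v)]
    split_ifs <;> norm_num
  -- backward step
  have hbwd : 0 < Pinf m n ⟨(A.erase s(u, u'), u', v), hws⟩ ⟨(A, u, v), hst⟩ := by
    unfold Pinf
    by_cases hu'v : u' = v
    · subst hu'v
      rw [if_pos (rfl : u' = u')]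
      have h2 : (∃ w, HoneyAdj m n u' w ∧ s(u', w) ∉ A.erase s(u, u') ∧
          A = insert s(u', w) (A.erase s(u, u')) ∧
          ((u = w ∧ u' = u') ∨ (u = u' ∧ u' = w))) := by
        refine ⟨u, honeyAdj_symm m n hadj, ?_, ?_, Or.inl ⟨rfl, rfl⟩⟩
        · rw [Sym2.eq_swap]; exact Finset.notMem_erase _ _
        · rw [Sym2.eq_swap, Finset.insert_erase hAe]
      rw [if_pos h2]
      have h1 : (0:ℝ) ≤ if (⟨(A, u, u'), hst⟩ : WormState m n) = ⟨(A.erase s(u, u'), u', u'), hws⟩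
          then (bdeg m n (A.erase s(u, u')) u' : ℝ) / 3 else 0 := by
        split <;> positivity
      linarith
    · rw [if_neg (hu'v : ¬ u' = v)]
      have hd2 : bdeg m n A u' = 2 := by
        have he : ¬ Odd (bdeg m n A u') := by
          rw [hodd u']; rintro ⟨h | h, -⟩
          · exact huu' h.symm
          · exact hu'v h
        have h3 := bdeg_le_three m n hn hn2 hAE u'
        have h0 := hRA u'
        rw [Nat.odd_iff] at he
        omega
      have hd1 : bdeg m n (A.erase s(u, u')) u' = 1 := by
        rw [bdeg_erase_of_mem m n hAe hu'mem, hd2]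
      have h2 : (bdeg m n (A.erase s(u, u')) u' = 1 ∧ ∃ w, HoneyAdj m n u' w ∧
          s(u', w) ∉ A.erase s(u, u') ∧ A = insert s(u', w) (A.erase s(u, u')) ∧
          u = w ∧ v = v) := by
        refine ⟨hd1, u, honeyAdj_symm m n hadj, ?_, ?_, rfl, rfl⟩
        · rw [Sym2.eq_swap]; exact Finset.notMem_erase _ _
        · rw [Sym2.eq_swap, Finset.insert_erase hAe]
      rw [if_pos h2]
      have hn3 : ¬ (bdeg m n (A.erase s(u, u')) u' = 3 ∧ ∃ w, HoneyAdj m n u' w ∧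
          s(u', w) ∈ A.erase s(u, u') ∧ A = (A.erase s(u, u')).erase s(u', w) ∧
          u = w ∧ v = v) := fun hc => by rw [hd1] at hc; exact absurd hc.1 (by norm_num)
      rw [if_neg hn3]
      have h3 : (0:ℝ) ≤ if bdeg m n (A.erase s(u, u')) v = 3 ∧ ∃ w, HoneyAdj m n v w ∧
          s(v, w) ∈ A.erase s(u, u') ∧ A = (A.erase s(u, u')).erase s(v, w) ∧
          u = u' ∧ v = w then 1/6 else 0 := by split <;> norm_num
      have h4 : (0:ℝ) ≤ if bdeg m n (A.erase s(u, u')) v = 1 ∧ ∃ w, HoneyAdj m n v w ∧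
          s(v, w) ∉ A.erase s(u, u') ∧ A = insert s(v, w) (A.erase s(u, u')) ∧
          u = u' ∧ v = w then 1/4 else 0 := by split <;> norm_num
      linarith
  exact ⟨⟨(A.erase s(u, u'), u', v), hws⟩, rfl, step _ _ hfwd, step _ _ hbwd⟩

end FPL
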